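/- Let n ≥ 1 and suppose real numbers r' and ρˢ_{i,m} (s = 1,…,n; i ∈ {0,1}; m ranging over device choices) satisfy: for any choice (m₁,…,m_n), the matrix [[1, r'],[r', 1]] - Σ_{s=1}^n v_s v_s^T is positive semidefinite, where v_s = (ρˢ_{0,m_s}, ρˢ_{1,m_s}). Then for any two choices (i₁,…,i_n) and (j₁,…,j_n), defining B_s = ρˢ_{0,i_s} + ρˢ_{1,i_s} + ρˢ_{0,j_s} - ρˢ_{1,j_s}, one has Σ_{s=1}^n |B_s| ≤ √(2n)(√(1+r') + √(1-r')) ≤ 2√(2n). -/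

import Mathlib

theorem stmt_11 (n : ℕ) (hn : 1 ≤ n) (r' : ℝ) (ρ : Fin n → Fin 2 → ℕ → ℝ)
    (h : ∀ c : Fin n → ℕ,
      (!![(1 : ℝ), r'; r', 1] -
        ∑ s : Fin n, Matrix.vecMulVec ![ρ s 0 (c s), ρ s 1 (c s)]
          ![ρ s 0 (c s), ρ s 1 (c s)]).PosSemidef)
    (i j : Fin n → ℕ) :
    (∑ s : Fin n, |ρ s 0 (i s) + ρ s 1 (i s) + ρ s 0 (j s) - ρ s 1 (j s)|) ≤
        Real.sqrt (2 * n) * (Real.sqrt (1 + r') + Real.sqrt (1 - r')) ∧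
      Real.sqrt (2 * n) * (Real.sqrt (1 + r') + Real.sqrt (1 - r')) ≤
        2 * Real.sqrt (2 * n) := by
  have key : ∀ (c : Fin n → ℕ) (x0 x1 : ℝ),
      ∑ s : Fin n, (x0 * ρ s 0 (c s) + x1 * ρ s 1 (c s))^2 ≤
        x0^2 + 2*r'*x0*x1 + x1^2 := by
    intro c x0 x1
    have := (h c).dotProduct_mulVec_nonneg ![x0, x1]
    simp [Matrix.mulVec, dotProduct, Matrix.sub_apply, Matrix.sum_apply,
      Matrix.vecMulVec_apply, Fin.sum_univ_two] at this
    set S00 := ∑ x : Fin n, ρ x 0 (c x) * ρ x 0 (c x) with hS00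
    set S01 := ∑ x : Fin n, ρ x 0 (c x) * ρ x 1 (c x) with hS01
    set S10 := ∑ x : Fin n, ρ x 1 (c x) * ρ x 0 (c x) with hS10
    set S11 := ∑ x : Fin n, ρ x 1 (c x) * ρ x 1 (c x) with hS11
    have h10 : S10 = S01 := Finset.sum_congr rfl fun s _ => mul_comm _ _
    have hexp : ∑ s : Fin n, (x0 * ρ s 0 (c s) + x1 * ρ s 1 (c s))^2 =
        x0^2*S00 + 2*x0*x1*S01 + x1^2*S11 := by
      rw [hS00, hS01, hS11, Finset.mul_sum, Finset.mul_sum, Finset.mul_sum,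
        ← Finset.sum_add_distrib, ← Finset.sum_add_distrib]
      exact Finset.sum_congr rfl fun s _ => by ring
    rw [hexp]
    rw [h10] at this
    ring_nf at this ⊢
    linarith [this]
  -- quadratic-form bounds
  have hA : ∑ s : Fin n, (ρ s 0 (i s) + ρ s 1 (i s))^2 ≤ 2*(1+r') := by
    have h2 := key i 1 1
    calc ∑ s : Fin n, (ρ s 0 (i s) + ρ s 1 (i s))^2
        = ∑ s : Fin n, (1 * ρ s 0 (i s) + 1 * ρ s 1 (i s))^2 :=
          Finset.sum_congr rfl fun s _ => by ring
      _ ≤ 1^2 + 2*r'*1*1 + 1^2 := h2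
      _ = 2*(1+r') := by ring
  have hB : ∑ s : Fin n, (ρ s 0 (j s) - ρ s 1 (j s))^2 ≤ 2*(1-r') := by
    have h2 := key j 1 (-1)
    calc ∑ s : Fin n, (ρ s 0 (j s) - ρ s 1 (j s))^2
        = ∑ s : Fin n, (1 * ρ s 0 (j s) + (-1) * ρ s 1 (j s))^2 :=
          Finset.sum_congr rfl fun s _ => by ring
      _ ≤ 1^2 + 2*r'*1*(-1) + (-1)^2 := h2
      _ = 2*(1-r') := by ring
  have hAnn : (0:ℝ) ≤ ∑ s : Fin n, (ρ s 0 (i s) + ρ s 1 (i s))^2 :=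
    Finset.sum_nonneg fun s _ => sq_nonneg _
  have hBnn : (0:ℝ) ≤ ∑ s : Fin n, (ρ s 0 (j s) - ρ s 1 (j s))^2 :=
    Finset.sum_nonneg fun s _ => sq_nonneg _
  have hr1 : -1 ≤ r' := by linarith
  have hr2 : r' ≤ 1 := by linarith
  have hnpos : (0:ℝ) < n := by exact_mod_cast hn
  -- Cauchy–Schwarz step, generic
  have cs : ∀ (f : Fin n → ℝ) (C : ℝ), 0 ≤ C → (∑ s : Fin n, f s ^ 2) ≤ 2 * C →
      (∑ s : Fin n, |f s|) ≤ Real.sqrt (2*n) * Real.sqrt C := by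
    intro f C hC hsum
    have h1 : (∑ s : Fin n, |f s|)^2 ≤ n * (2 * C) := by
      calc (∑ s : Fin n, |f s|)^2 = (∑ s : Fin n, |f s| * 1)^2 := by simp
        _ ≤ (∑ s : Fin n, |f s|^2) * ∑ _s : Fin n, (1:ℝ)^2 :=
            Finset.sum_mul_sq_le_sq_mul_sq _ _ _
        _ = (n:ℝ) * ∑ s : Fin n, f s ^ 2 := by simp [sq_abs]; ring
        _ ≤ n * (2 * C) := by
            apply mul_le_mul_of_nonneg_left hsum hnpos.le
    have h0 : (0:ℝ) ≤ ∑ s : Fin n, |f s| := Finset.sum_nonneg fun s _ => abs_nonneg _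
    calc ∑ s : Fin n, |f s| = Real.sqrt ((∑ s : Fin n, |f s|)^2) := (Real.sqrt_sq h0).symm
      _ ≤ Real.sqrt (n * (2*C)) := Real.sqrt_le_sqrt h1
      _ = Real.sqrt (2*n) * Real.sqrt C := by
          rw [← Real.sqrt_mul (by positivity)]
          ring_nf
  have hCA : (0:ℝ) ≤ 1 + r' := by linarith
  have hCB : (0:ℝ) ≤ 1 - r' := by linarith
  have hA' := cs (fun s => ρ s 0 (i s) + ρ s 1 (i s)) (1+r') hCA (by linarith)
  have hB' := cs (fun s => ρ s 0 (j s) - ρ s 1 (j s)) (1-r') hCB (by linarith)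
  constructor
  · have tri : (∑ s : Fin n, |ρ s 0 (i s) + ρ s 1 (i s) + ρ s 0 (j s) - ρ s 1 (j s)|) ≤
        (∑ s : Fin n, |ρ s 0 (i s) + ρ s 1 (i s)|) + ∑ s : Fin n, |ρ s 0 (j s) - ρ s 1 (j s)| := by
      rw [← Finset.sum_add_distrib]
      apply Finset.sum_le_sum
      intro s _
      calc |ρ s 0 (i s) + ρ s 1 (i s) + ρ s 0 (j s) - ρ s 1 (j s)|
          = |(ρ s 0 (i s) + ρ s 1 (i s)) + (ρ s 0 (j s) - ρ s 1 (j s))| := by ring_nf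
        _ ≤ _ := abs_add_le _ _
    calc (∑ s : Fin n, |ρ s 0 (i s) + ρ s 1 (i s) + ρ s 0 (j s) - ρ s 1 (j s)|)
        ≤ _ := tri
      _ ≤ Real.sqrt (2*n) * Real.sqrt (1+r') + Real.sqrt (2*n) * Real.sqrt (1-r') :=
          add_le_add hA' hB'
      _ = Real.sqrt (2*(n:ℝ)) * (Real.sqrt (1+r') + Real.sqrt (1-r')) := by ring
  · have huv : Real.sqrt (1+r') + Real.sqrt (1-r') ≤ 2 := by
      have hu := Real.sq_sqrt hCA
      have hv := Real.sq_sqrt hCB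
      have huv0 : 0 ≤ Real.sqrt (1+r') * Real.sqrt (1-r') := by positivity
      have hprod : Real.sqrt (1+r') * Real.sqrt (1-r') ≤ 1 := by
        rw [← Real.sqrt_mul hCA]
        have h1 : (1+r')*(1-r') ≤ 1 := by nlinarith [sq_nonneg r']
        calc Real.sqrt ((1+r')*(1-r')) ≤ Real.sqrt 1 := Real.sqrt_le_sqrt h1
          _ = 1 := Real.sqrt_one
      nlinarith [Real.sqrt_nonneg (1+r'), Real.sqrt_nonneg (1-r')]
    have := Real.sqrt_nonneg (2*(n:ℝ))
    nlinarith
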